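/- For two input-enabled pQTSs A_i and A_s: A_i ⊑_pioco A_s if and only if trd(A_i) ⊆ trd(A_s). -/
import Mathlib


noncomputable section
attribute [local instance] Classical.propDecidable

structure pQTS (S L T : Type) [Fintype S] [Fintype L] [Fintype T] where
  init : S
  inputs : Set L
  delta : L
  delta_not_input : delta ∉ inputs
  src : T → S
  dist : T → L × S → ℝ
  dist_nonneg : ∀ t x, 0 ≤ dist t x
  dist_sum : ∀ t, ∑ x, dist t x = 1
  input_reactive : ∀ t (a : L) (s' : S), a ∈ inputs → 0 < dist t (a, s') →
    ∀ (b : L) (s'' : S), b ≠ a → dist t (b, s'') = 0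

variable {S L T : Type} [Fintype S] [Fintype L] [Fintype T]

/-- A step of a path: the transition (distribution) taken, the action, the target state. -/
abbrev PStep (S L T : Type) := T × L × S

/-- A finite path, stored with the most recent step first. -/
abbrev PPath (S L T : Type) := List (PStep S L T)

def lastState (A : pQTS S L T) : PPath S L T → S
  | [] => A.init
  | x :: _ => x.2.2

def ValidPath (A : pQTS S L T) : PPath S L T → Prop
  | [] => True
  | x :: π => ValidPath A π ∧ A.src x.1 = lastState A π ∧ 0 < A.dist x.1 (x.2.1, x.2.2)

def ptrace : PPath S L T → List L
  | [] => []
  | x :: π => ptrace π ++ [x.2.1]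

/-- A (partial, randomized, history-dependent) adversary: to each finite path it assigns
a distribution over the available transitions (`some t`) plus halting (`none`). -/
def IsAdversary (A : pQTS S L T) (E : PPath S L T → Option T → ℝ) : Prop :=
  (∀ π o, 0 ≤ E π o) ∧
  (∀ π t, 0 < E π (some t) → A.src t = lastState A π) ∧
  (∀ π, E π none + ∑ t, E π (some t) = 1)

/-- The path probability function `Q^E`. -/
def Qprob (A : pQTS S L T) (E : PPath S L T → Option T → ℝ) : PPath S L T → ℝ
  | [] => 1
  | x :: π => Qprob A E π * E π (some x.1) * A.dist x.1 (x.2.1, x.2.2)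

def pathsOfLength (A : pQTS S L T) : ℕ → Finset (PPath S L T)
  | 0 => {[]}
  | n + 1 => (pathsOfLength A n).biUnion
      (fun π => Finset.univ.image (fun x : PStep S L T => x :: π))

/-- The cone probability `P_H(C_σ)` of a finite trace σ under the trace distribution of `E`. -/
def traceProb (A : pQTS S L T) (E : PPath S L T → Option T → ℝ) (σ : List L) : ℝ :=
  ∑ π ∈ (pathsOfLength A σ.length).filter (fun π => ValidPath A π ∧ ptrace π = σ),
    Qprob A E π

def haltsAfter (E : PPath S L T → Option T → ℝ) (k : ℕ) : Prop :=
  ∀ π : PPath S L T, k ≤ π.length → E π none = 1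

/-- `trd A k`: trace distributions of adversaries of `A` halting after `k` steps,
represented by their cone probability functions on finite traces. -/
def trd (A : pQTS S L T) (k : ℕ) : Set (List L → ℝ) :=
  {f | ∃ E, IsAdversary A E ∧ haltsAfter E k ∧ ∀ σ, f σ = traceProb A E σ}

/-- `trdAll A`: all trace distributions of `A`. -/
def trdAll (A : pQTS S L T) : Set (List L → ℝ) :=
  {f | ∃ E, IsAdversary A E ∧ ∀ σ, f σ = traceProb A E σ}

/-- `H ⊑_k H'` : the two trace distributions agree on all traces of length `k`. -/
def prefixTD (L : Type) (k : ℕ) (H H' : List L → ℝ) : Prop :=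
  ∀ σ : List L, σ.length = k → H σ = H' σ

/-- Output continuations of `H` in `A` w.r.t. length `k`. -/
def outcont (H : List L → ℝ) (A : pQTS S L T) (k : ℕ) : Set (List L → ℝ) :=
  {H' | H' ∈ trd A (k + 1) ∧ prefixTD L k H H' ∧
    ∀ (σ : List L) (a : L), σ.length = k → a ∈ A.inputs → H' (σ ++ [a]) = 0}

def inputEnabled (A : pQTS S L T) : Prop :=
  ∀ s : S, ∀ a ∈ A.inputs, ∃ (t : T) (s' : S), A.src t = s ∧ 0 < A.dist t (a, s')

def pioco {S1 T1 S2 T2 : Type} [Fintype S1] [Fintype T1] [Fintype S2] [Fintype T2]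
    (Ai : pQTS S1 L T1) (As : pQTS S2 L T2) : Prop :=
  ∀ k : ℕ, ∀ H ∈ trd As k, outcont H Ai k ⊆ outcont H As k

def Traces (A : pQTS S L T) : Set (List L) :=
  {σ | ∃ π : PPath S L T, ValidPath A π ∧ ptrace π = σ}

/-- `out_A(σ)`: outputs (including quiescence) enabled after trace σ. -/
def outSet (A : pQTS S L T) (σ : List L) : Set L :=
  {a | a ∉ A.inputs ∧ ∃ π : PPath S L T, ValidPath A π ∧ ptrace π = σ ∧
    ∃ (t : T) (s' : S), A.src t = lastState A π ∧ 0 < A.dist t (a, s')}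

def ioco {S1 T1 S2 T2 : Type} [Fintype S1] [Fintype T1] [Fintype S2] [Fintype T2]
    (Ai : pQTS S1 L T1) (As : pQTS S2 L T2) : Prop :=
  ∀ σ ∈ Traces As, outSet Ai σ ⊆ outSet As σ

/-- A (nonprobabilistic) QTS: every occurring distribution is a Dirac distribution. -/
def IsQTS (A : pQTS S L T) : Prop :=
  ∀ t : T, ∃ x : L × S, ∀ y, A.dist t y = if y = x then 1 else 0


section Helpers

lemma mem_pathsOfLength_length {A : pQTS S L T} :
    ∀ {n : ℕ} {π : PPath S L T}, π ∈ pathsOfLength A n → π.length = n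
  | 0, π, h => by simp [pathsOfLength] at h; simp [h]
  | n + 1, π, h => by
    simp only [pathsOfLength, Finset.mem_biUnion, Finset.mem_image, Finset.mem_univ,
      true_and] at h
    obtain ⟨ρ, hρ, x, rfl⟩ := h
    simp [mem_pathsOfLength_length hρ]

lemma Qprob_nonneg {A : pQTS S L T} {E : PPath S L T → Option T → ℝ}
    (h0 : ∀ π o, 0 ≤ E π o) : ∀ π, 0 ≤ Qprob A E π
  | [] => by simp [Qprob]
  | x :: π => mul_nonneg (mul_nonneg (Qprob_nonneg h0 π) (h0 π (some x.1)))
      (A.dist_nonneg _ _)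

lemma traceProb_nonneg {A : pQTS S L T} {E : PPath S L T → Option T → ℝ}
    (h0 : ∀ π o, 0 ≤ E π o) (σ : List L) : 0 ≤ traceProb A E σ :=
  Finset.sum_nonneg fun π _ => Qprob_nonneg h0 π

lemma Qprob_congr {A : pQTS S L T} {E E' : PPath S L T → Option T → ℝ} {n : ℕ}
    (h : ∀ π : PPath S L T, π.length < n → ∀ o, E π o = E' π o) :
    ∀ π : PPath S L T, π.length ≤ n → Qprob A E π = Qprob A E' π
  | [], _ => rfl
  | x :: π, hl => by
    have hlt : π.length < n := by simpa using hl
    rw [Qprob, Qprob, Qprob_congr h π (le_of_lt hlt), h π hlt]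

lemma traceProb_congr {A : pQTS S L T} {E E' : PPath S L T → Option T → ℝ} {n : ℕ}
    (h : ∀ π : PPath S L T, π.length < n → ∀ o, E π o = E' π o)
    (σ : List L) (hσ : σ.length ≤ n) : traceProb A E σ = traceProb A E' σ := by
  refine Finset.sum_congr rfl fun π hπ => ?_
  have := mem_pathsOfLength_length (Finset.mem_filter.1 hπ).1
  exact Qprob_congr h π (this ▸ hσ)

lemma adv_some_le {A : pQTS S L T} {E : PPath S L T → Option T → ℝ}
    (hE : IsAdversary A E) (π : PPath S L T) (t : T) : E π (some t) ≤ 1 := by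
  have h := hE.2.2 π
  have h1 : E π (some t) ≤ ∑ t', E π (some t') :=
    Finset.single_le_sum (fun t' _ => hE.1 π (some t')) (Finset.mem_univ t)
  nlinarith [hE.1 π none]

lemma adv_none_le {A : pQTS S L T} {E : PPath S L T → Option T → ℝ}
    (hE : IsAdversary A E) (π : PPath S L T) : E π none ≤ 1 := by
  have h := hE.2.2 π
  have : 0 ≤ ∑ t', E π (some t') := Finset.sum_nonneg fun t' _ => hE.1 π (some t')
  linarith

lemma adv_some_eq_zero {A : pQTS S L T} {E : PPath S L T → Option T → ℝ}
    (hE : IsAdversary A E) {π : PPath S L T} (h1 : E π none = 1) (t : T) :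
    E π (some t) = 0 := by
  have h := hE.2.2 π
  rw [h1] at h
  have hsum : ∑ t', E π (some t') = 0 := by linarith
  have := (Finset.sum_eq_zero_iff_of_nonneg (fun t' _ => hE.1 π (some t'))).1 hsum
  exact this t (Finset.mem_univ t)

lemma adv_some_eq_zero' {A : pQTS S L T} {E : PPath S L T → Option T → ℝ}
    (hE : IsAdversary A E) {π : PPath S L T} {t : T}
    (h : A.src t ≠ lastState A π) : E π (some t) = 0 := by
  by_contra hne
  exact h (hE.2.1 π t (lt_of_le_of_ne (hE.1 π (some t)) (Ne.symm hne)))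

lemma traceProb_eq_zero_of_halts {A : pQTS S L T} {E : PPath S L T → Option T → ℝ}
    (hE : IsAdversary A E) {k : ℕ} (hh : haltsAfter E k) {σ : List L}
    (hσ : k < σ.length) : traceProb A E σ = 0 := by
  refine Finset.sum_eq_zero fun π hπ => ?_
  have hl := mem_pathsOfLength_length (Finset.mem_filter.1 hπ).1
  match π, hl with
  | [], hl => simp at hl; omega
  | x :: π, hl =>
    have hlen : k ≤ π.length := by
      simp only [List.length_cons] at hl; omega
    have := adv_some_eq_zero hE (hh π hlen) x.1
    rw [Qprob, this]
    ring

/-- The adversary `E` truncated to halt after `k` steps. -/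
def truncAdv (E : PPath S L T → Option T → ℝ) (k : ℕ) :
    PPath S L T → Option T → ℝ :=
  fun π o => if π.length < k then E π o else (if o = none then 1 else 0)

lemma truncAdv_isAdversary {A : pQTS S L T} {E : PPath S L T → Option T → ℝ}
    (hE : IsAdversary A E) (k : ℕ) : IsAdversary A (truncAdv E k) := by
  refine ⟨fun π o => ?_, fun π t h => ?_, fun π => ?_⟩
  · unfold truncAdv; split
    · exact hE.1 π o
    · split <;> norm_num
  · unfold truncAdv at h; split at h
    · exact hE.2.1 π t h
    · simp at h
  · unfold truncAdv; split
    · exact hE.2.2 π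
    · simp

lemma truncAdv_halts (E : PPath S L T → Option T → ℝ) (k : ℕ) :
    haltsAfter (truncAdv E k) k := by
  intro π hπ
  unfold truncAdv
  rw [if_neg (by omega), if_pos rfl]

lemma traceProb_truncAdv {A : pQTS S L T} (E : PPath S L T → Option T → ℝ) {k : ℕ}
    {σ : List L} (hσ : σ.length ≤ k) :
    traceProb A (truncAdv E k) σ = traceProb A E σ :=
  traceProb_congr (fun π hπ o => by unfold truncAdv; rw [if_pos hπ]) σ hσ

end Helpers


section Master

lemma snoc_inj {α : Type*} {l₁ l₂ : List α} {a b : α} (h : l₁ ++ [a] = l₂ ++ [b]) :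
    l₁ = l₂ ∧ a = b := by
  have := List.append_inj' h (by simp)
  exact ⟨this.1, by simpa using this.2⟩

/-- Total emission probability of action `c` by transition `t`. -/
def emi (A : pQTS S L T) (t : T) (c : L) : ℝ := ∑ s' : S, A.dist t (c, s')

lemma em_nonneg (A : pQTS S L T) (t : T) (c : L) : 0 ≤ emi A t c :=
  Finset.sum_nonneg fun _ _ => A.dist_nonneg _ _

lemma em_sum (A : pQTS S L T) (t : T) : ∑ c, emi A t c = 1 := by
  rw [← A.dist_sum t, Fintype.sum_prod_type]
  rfl

lemma em_input_ne {A : pQTS S L T} {t : T} {a : L} {s0 : S}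
    (ha : a ∈ A.inputs) (hd : 0 < A.dist t (a, s0)) {c : L} (hc : c ≠ a) :
    emi A t c = 0 :=
  Finset.sum_eq_zero fun s' _ => A.input_reactive t a s0 ha hd c s' hc

lemma em_input_eq_one {A : pQTS S L T} {t : T} {a : L} {s0 : S}
    (ha : a ∈ A.inputs) (hd : 0 < A.dist t (a, s0)) : emi A t a = 1 := by
  have h := em_sum A t
  rw [Finset.sum_eq_single a (fun c _ hc => em_input_ne ha hd hc) (by simp)] at h
  exact h

lemma traceProb_snoc {A : pQTS S L T} {F : PPath S L T → Option T → ℝ}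
    (hF : IsAdversary A F) (σ : List L) (c : L) :
    traceProb A F (σ ++ [c]) =
      ∑ π ∈ (pathsOfLength A σ.length).filter
          (fun π => ValidPath A π ∧ ptrace π = σ),
        Qprob A F π * ∑ t, F π (some t) * emi A t c := by
  have hlen : (σ ++ [c]).length = σ.length + 1 := by simp
  rw [traceProb, hlen]
  simp only [pathsOfLength]
  rw [Finset.sum_filter, Finset.sum_biUnion ?hdisj]
  case hdisj =>
    intro π hπ ρ hρ hne
    simp only [Function.onFun]
    rw [Finset.disjoint_left]
    rintro l hl hl'
    simp only [Finset.mem_image, Finset.mem_univ, true_and] at hl hl'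
    obtain ⟨x, rfl⟩ := hl
    obtain ⟨y, h⟩ := hl'
    exact hne (by injection h; simp_all)
  rw [Finset.sum_filter]
  refine Finset.sum_congr rfl fun π hπ => ?_
  rw [Finset.sum_image (by intro x _ y _ h; injection h)]
  by_cases hv : ValidPath A π ∧ ptrace π = σ
  · rw [if_pos hv]
    have step : ∀ x : PStep S L T,
        (if ValidPath A (x :: π) ∧ ptrace (x :: π) = σ ++ [c]
          then Qprob A F (x :: π) else 0)
        = Qprob A F π * F π (some x.1) *
            (if x.2.1 = c then A.dist x.1 (x.2.1, x.2.2) else 0) := by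
      rintro ⟨t, a, s'⟩
      simp only
      by_cases ha : a = c
      · subst ha
        rw [if_pos rfl]
        by_cases hsrc : A.src t = lastState A π
        · by_cases hd : 0 < A.dist t (a, s')
          · rw [if_pos ⟨⟨hv.1, hsrc, hd⟩, by simp [ptrace, hv.2]⟩]
            rfl
          · rw [if_neg (by rintro ⟨⟨_, _, h⟩, _⟩; exact hd h)]
            have : A.dist t (a, s') = 0 :=
              le_antisymm (not_lt.1 hd) (A.dist_nonneg _ _)
            rw [this]; ring
        · rw [if_neg (by rintro ⟨⟨_, h, _⟩, _⟩; exact hsrc h),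
            adv_some_eq_zero' hF hsrc]
          ring
      · rw [if_neg ha, if_neg (by
          rintro ⟨_, htr⟩
          simp only [ptrace] at htr
          exact ha (snoc_inj htr).2)]
        ring
    rw [Finset.sum_congr rfl fun x _ => step x]
    rw [Finset.mul_sum, Fintype.sum_prod_type]
    refine Finset.sum_congr rfl fun t _ => ?_
    rw [Fintype.sum_prod_type]
    have : ∀ a : L, (∑ s' : S, Qprob A F π * F π (some t) *
        (if a = c then A.dist t (a, s') else 0))
        = if a = c then Qprob A F π * F π (some t) * emi A t a else 0 := by
      intro a
      split
      · rw [emi, Finset.mul_sum]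
      · simp
    rw [Finset.sum_congr rfl fun a _ => this a, Finset.sum_ite_eq' Finset.univ c]
    simp [mul_assoc]
  · rw [if_neg hv]
    refine Finset.sum_eq_zero fun x _ => ?_
    rw [if_neg]
    rintro ⟨hval, htr⟩
    simp only [ptrace] at htr
    exact hv ⟨hval.1, (snoc_inj htr).1⟩

/-- Summing the master lemma over all actions. -/
lemma sum_traceProb_snoc {A : pQTS S L T} {F : PPath S L T → Option T → ℝ}
    (hF : IsAdversary A F) (σ : List L) :
    ∑ c, traceProb A F (σ ++ [c]) =
      ∑ π ∈ (pathsOfLength A σ.length).filter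
          (fun π => ValidPath A π ∧ ptrace π = σ),
        Qprob A F π * ∑ t, F π (some t) := by
  rw [Finset.sum_congr rfl fun c _ => traceProb_snoc hF σ c, Finset.sum_comm]
  refine Finset.sum_congr rfl fun π _ => ?_
  rw [← Finset.mul_sum, Finset.sum_comm]
  congr 1
  refine Finset.sum_congr rfl fun t _ => ?_
  rw [← Finset.mul_sum, em_sum, mul_one]

end Master


section OutAdv

lemma ptrace_length : ∀ π : PPath S L T, (ptrace π).length = π.length
  | [] => rfl
  | x :: π => by simp [ptrace, ptrace_length π]

lemma sum_some_le_one {A : pQTS S L T} {E : PPath S L T → Option T → ℝ}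
    (hE : IsAdversary A E) (π : PPath S L T) : ∑ t, E π (some t) ≤ 1 := by
  have h := hE.2.2 π
  have := hE.1 π none
  linarith

lemma traceProb_nil (A : pQTS S L T) (E : PPath S L T → Option T → ℝ) :
    traceProb A E [] = 1 := by
  simp [traceProb, pathsOfLength, ValidPath, ptrace, Qprob, Finset.filter_singleton]

/-- `t` is an output-only transition. -/
def outT (A : pQTS S L T) (t : T) : Prop := ∀ a ∈ A.inputs, ∀ s' : S, A.dist t (a, s') = 0

/-- The adversary `E` modified to take only output transitions at step `k+1` and
halt after `k+1` steps. -/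
def outAdv (A : pQTS S L T) (E : PPath S L T → Option T → ℝ) (k : ℕ) :
    PPath S L T → Option T → ℝ := fun π o =>
  if π.length < k then E π o
  else if π.length = k then
    Option.elim o (1 - ∑ t ∈ Finset.univ.filter (outT A), E π (some t))
      (fun t => if outT A t then E π (some t) else 0)
  else if o = none then 1 else 0

lemma outAdv_isAdversary {A : pQTS S L T} {E : PPath S L T → Option T → ℝ}
    (hE : IsAdversary A E) (k : ℕ) : IsAdversary A (outAdv A E k) := by
  have hsub : ∀ π : PPath S L T,
      ∑ t ∈ Finset.univ.filter (outT A), E π (some t) ≤ 1 := by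
    intro π
    refine le_trans (Finset.sum_le_sum_of_subset_of_nonneg
      (Finset.filter_subset _ _) (fun t _ _ => hE.1 π (some t))) (sum_some_le_one hE π)
  refine ⟨fun π o => ?_, fun π t h => ?_, fun π => ?_⟩
  · unfold outAdv
    split
    · exact hE.1 π o
    · split
      · cases o with
        | none => simpa using hsub π
        | some t =>
          simp only [Option.elim]
          split
          · exact hE.1 π _
          · exact le_refl _
      · split <;> norm_num
  · unfold outAdv at h
    split at h
    · exact hE.2.1 π t h
    · split at h
      · simp only [Option.elim] at h
        split at h
        · exact hE.2.1 π t h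
        · simp at h
      · split at h
        · simp_all
        · simp at h
  · unfold outAdv
    split
    · exact hE.2.2 π
    · split
      · simp only [Option.elim]
        have : ∑ t : T, (if outT A t then E π (some t) else 0)
            = ∑ t ∈ Finset.univ.filter (outT A), E π (some t) :=
          (Finset.sum_filter _ _).symm
        rw [this]
        ring
      · simp

lemma outAdv_halts (A : pQTS S L T) (E : PPath S L T → Option T → ℝ) (k : ℕ) :
    haltsAfter (outAdv A E k) (k + 1) := by
  intro π hπ
  unfold outAdv
  rw [if_neg (by omega), if_neg (by omega), if_pos rfl]

lemma outAdv_traceProb_low {A : pQTS S L T} (E : PPath S L T → Option T → ℝ) {k : ℕ}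
    {σ : List L} (hσ : σ.length ≤ k) :
    traceProb A (outAdv A E k) σ = traceProb A E σ :=
  traceProb_congr (fun π hπ o => by unfold outAdv; rw [if_pos hπ]) σ hσ

lemma outAdv_snoc_input {A : pQTS S L T} {E : PPath S L T → Option T → ℝ}
    (hE : IsAdversary A E) {k : ℕ} {σ : List L} (hσ : σ.length = k) {c : L}
    (hc : c ∈ A.inputs) : traceProb A (outAdv A E k) (σ ++ [c]) = 0 := by
  rw [traceProb_snoc (outAdv_isAdversary hE k) σ c]
  refine Finset.sum_eq_zero fun π hπ => ?_
  have hl : π.length = k := hσ ▸ mem_pathsOfLength_length (Finset.mem_filter.1 hπ).1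
  have : ∀ t, outAdv A E k π (some t) * emi A t c = 0 := by
    intro t
    unfold outAdv
    rw [if_neg (by omega), if_pos hl]
    simp only [Option.elim]
    split
    · rename_i h
      have : emi A t c = 0 := Finset.sum_eq_zero fun s' _ => h c hc s'
      rw [this, mul_zero]
    · rw [zero_mul]
  rw [Finset.sum_congr rfl fun t _ => this t]
  simp

lemma outAdv_snoc_output {A : pQTS S L T} {E : PPath S L T → Option T → ℝ}
    (hE : IsAdversary A E) {k : ℕ} {σ : List L} (hσ : σ.length = k) {c : L}
    (hc : c ∉ A.inputs) :
    traceProb A (outAdv A E k) (σ ++ [c]) = traceProb A E (σ ++ [c]) := by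
  rw [traceProb_snoc (outAdv_isAdversary hE k) σ c, traceProb_snoc hE σ c]
  refine Finset.sum_congr rfl fun π hπ => ?_
  have hl : π.length = k := hσ ▸ mem_pathsOfLength_length (Finset.mem_filter.1 hπ).1
  have hq : Qprob A (outAdv A E k) π = Qprob A E π :=
    Qprob_congr (fun ρ hρ o => by unfold outAdv; rw [if_pos hρ]) π (le_of_eq hl)
  rw [hq]
  congr 1
  refine Finset.sum_congr rfl fun t _ => ?_
  unfold outAdv
  rw [if_neg (by omega), if_pos hl]
  simp only [Option.elim]
  split
  · rfl
  · rename_i h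
    simp only [outT, not_forall] at h
    obtain ⟨a, ha, s', hd⟩ := h
    have hd' : 0 < A.dist t (a, s') := lt_of_le_of_ne (A.dist_nonneg _ _) (Ne.symm hd)
    rw [em_input_ne ha hd' (by rintro rfl; exact hc ha)]
    ring

end OutAdv


section InpAdv

/-- Halting mass at the paths with trace `σ`. -/
lemma halt_mass {A : pQTS S L T} {F : PPath S L T → Option T → ℝ}
    (hF : IsAdversary A F) (σ : List L) :
    ∑ π ∈ (pathsOfLength A σ.length).filter
        (fun π => ValidPath A π ∧ ptrace π = σ), Qprob A F π * F π none
      = traceProb A F σ - ∑ c, traceProb A F (σ ++ [c]) := by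
  rw [sum_traceProb_snoc hF σ, traceProb, ← Finset.sum_sub_distrib]
  refine Finset.sum_congr rfl fun π _ => ?_
  have h := hF.2.2 π
  have : F π none = 1 - ∑ t, F π (some t) := by linarith
  rw [this]
  ring

lemma sum_snoc_le {A : pQTS S L T} {E : PPath S L T → Option T → ℝ}
    (hE : IsAdversary A E) (σ : List L) :
    ∑ c, traceProb A E (σ ++ [c]) ≤ traceProb A E σ := by
  rw [sum_traceProb_snoc hE σ, traceProb]
  refine Finset.sum_le_sum fun π _ => ?_
  calc Qprob A E π * ∑ t, E π (some t) ≤ Qprob A E π * 1 :=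
        mul_le_mul_of_nonneg_left (sum_some_le_one hE π) (Qprob_nonneg hE.1 π)
    _ = Qprob A E π := mul_one _

/-- The adversary `F` modified to also take, at step `k+1`, input transitions
(chosen by `tsel`) with probabilities `q`, carved out of the halting probability. -/
def inpAdv (A : pQTS S L T) (F : PPath S L T → Option T → ℝ) (k : ℕ)
    (q : List L → L → ℝ) (tsel : S → {a : L // a ∈ A.inputs} → T) :
    PPath S L T → Option T → ℝ := fun π o =>
  if π.length = k then
    Option.elim o (F π none * (1 - ∑ a : {a : L // a ∈ A.inputs}, q (ptrace π) a.1))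
      (fun t => F π (some t) + F π none *
        ∑ a : {a : L // a ∈ A.inputs},
          (if tsel (lastState A π) a = t then q (ptrace π) a.1 else 0))
  else F π o

variable {A : pQTS S L T} {F : PPath S L T → Option T → ℝ} {k : ℕ}
  {q : List L → L → ℝ} {tsel : S → {a : L // a ∈ A.inputs} → T}

lemma inpAdv_isAdversary (hF : IsAdversary A F)
    (hq0 : ∀ σ a, 0 ≤ q σ a)
    (hq1 : ∀ σ : List L, σ.length = k → ∑ a : {a : L // a ∈ A.inputs}, q σ a.1 ≤ 1)
    (htsrc : ∀ s a, A.src (tsel s a) = s) :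
    IsAdversary A (inpAdv A F k q tsel) := by
  refine ⟨fun π o => ?_, fun π t h => ?_, fun π => ?_⟩
  · unfold inpAdv
    split
    · rename_i hl
      cases o with
      | none =>
        simp only [Option.elim]
        refine mul_nonneg (hF.1 π none) ?_
        have := hq1 (ptrace π) (by rw [ptrace_length]; exact hl)
        linarith
      | some t =>
        simp only [Option.elim]
        refine add_nonneg (hF.1 π _) (mul_nonneg (hF.1 π none)
          (Finset.sum_nonneg fun a _ => ?_))
        split
        · exact hq0 _ _
        · exact le_refl _
    · exact hF.1 π o
  · unfold inpAdv at h
    split at h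
    · simp only [Option.elim] at h
      by_contra hsrc
      rw [adv_some_eq_zero' hF hsrc, zero_add] at h
      have hpos : 0 < ∑ a : {a : L // a ∈ A.inputs},
          (if tsel (lastState A π) a = t then q (ptrace π) a.1 else 0) := by
        rcases lt_or_eq_of_le (hF.1 π none) with h1 | h1
        · by_contra hn
          have : ∑ a : {a : L // a ∈ A.inputs},
              (if tsel (lastState A π) a = t then q (ptrace π) a.1 else 0) ≤ 0 :=
            not_lt.1 hn
          nlinarith
        · rw [← h1, zero_mul] at h; exact absurd h (lt_irrefl 0)
      obtain ⟨a, _, ha⟩ := Finset.exists_lt_of_sum_lt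
        (show ∑ _a : {a : L // a ∈ A.inputs}, (0:ℝ) < _ by simpa using hpos)
      split at ha
      · rename_i he
        exact hsrc (he ▸ htsrc (lastState A π) a)
      · exact absurd ha (lt_irrefl 0)
    · exact hF.2.1 π t h
  · unfold inpAdv
    split
    · simp only [Option.elim]
      have hswap : ∑ t, ∑ a : {a : L // a ∈ A.inputs},
          (if tsel (lastState A π) a = t then q (ptrace π) a.1 else 0)
          = ∑ a : {a : L // a ∈ A.inputs}, q (ptrace π) a.1 := by
        rw [Finset.sum_comm]
        refine Finset.sum_congr rfl fun a _ => ?_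
        rw [Finset.sum_ite_eq Finset.univ (tsel (lastState A π) a)]
        simp
      rw [Finset.sum_add_distrib, ← Finset.mul_sum, hswap]
      have h := hF.2.2 π
      ring_nf
      linarith [hF.2.2 π]
    · exact hF.2.2 π

lemma inpAdv_halts (hFh : haltsAfter F (k + 1)) :
    haltsAfter (inpAdv A F k q tsel) (k + 1) := by
  intro π hπ
  unfold inpAdv
  rw [if_neg (by omega)]
  exact hFh π hπ

lemma inpAdv_traceProb_low {σ : List L} (hσ : σ.length ≤ k) :
    traceProb A (inpAdv A F k q tsel) σ = traceProb A F σ :=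
  traceProb_congr (fun π hπ o => by unfold inpAdv; rw [if_neg (by omega)]) σ hσ

lemma inpAdv_snoc (hF : IsAdversary A F)
    (hq0 : ∀ σ a, 0 ≤ q σ a)
    (hq1 : ∀ σ : List L, σ.length = k → ∑ a : {a : L // a ∈ A.inputs}, q σ a.1 ≤ 1)
    (htsrc : ∀ s a, A.src (tsel s a) = s)
    (hemi1 : ∀ s a, emi A (tsel s a) a.1 = 1)
    (hemi0 : ∀ s a c, c ≠ (a : {a : L // a ∈ A.inputs}).1 → emi A (tsel s a) c = 0)
    {σ : List L} (hσ : σ.length = k) (c : L) :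
    traceProb A (inpAdv A F k q tsel) (σ ++ [c]) = traceProb A F (σ ++ [c]) +
      (∑ π ∈ (pathsOfLength A σ.length).filter
          (fun π => ValidPath A π ∧ ptrace π = σ), Qprob A F π * F π none) *
        (∑ a : {a : L // a ∈ A.inputs}, if a.1 = c then q σ a.1 else 0) := by
  rw [traceProb_snoc (inpAdv_isAdversary hF hq0 hq1 htsrc) σ c,
    traceProb_snoc hF σ c, Finset.sum_mul, ← Finset.sum_add_distrib]
  refine Finset.sum_congr rfl fun π hπ => ?_
  have h' := Finset.mem_filter.1 hπ
  have hmem := h'.1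
  have htr := h'.2.2
  have hl : π.length = k := hσ ▸ mem_pathsOfLength_length hmem
  have hQ : Qprob A (inpAdv A F k q tsel) π = Qprob A F π :=
    Qprob_congr (fun ρ hρ o => by unfold inpAdv; rw [if_neg (by omega)]) π (le_of_eq hl)
  rw [hQ]
  have hG : ∀ t, inpAdv A F k q tsel π (some t) = F π (some t) + F π none *
      ∑ a : {a : L // a ∈ A.inputs},
        (if tsel (lastState A π) a = t then q σ a.1 else 0) := by
    intro t
    unfold inpAdv
    rw [if_pos hl]
    simp only [Option.elim, htr]
  rw [Finset.sum_congr rfl fun t _ => by rw [hG t, add_mul]]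
  rw [Finset.sum_add_distrib]
  congr 1
  have hstep : ∀ t, (F π none * ∑ a : {a : L // a ∈ A.inputs},
      (if tsel (lastState A π) a = t then q σ a.1 else 0)) * emi A t c
      = F π none * ∑ a : {a : L // a ∈ A.inputs},
        (if tsel (lastState A π) a = t then q σ a.1 * emi A t c else 0) := by
    intro t
    rw [mul_assoc, Finset.sum_mul]
    congr 1
    refine Finset.sum_congr rfl fun a _ => ?_
    split <;> simp
  rw [Finset.sum_congr rfl fun t _ => hstep t, ← Finset.mul_sum, Finset.sum_comm]
  have hinner : ∀ a : {a : L // a ∈ A.inputs},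
      ∑ t, (if tsel (lastState A π) a = t then q σ a.1 * emi A t c else 0)
      = if a.1 = c then q σ a.1 else 0 := by
    intro a
    rw [Finset.sum_ite_eq Finset.univ (tsel (lastState A π) a)]
    simp only [Finset.mem_univ, if_pos]
    by_cases hac : a.1 = c
    · rw [if_pos hac, ← hac, hemi1, mul_one]
    · rw [if_neg hac, hemi0 _ _ _ (fun h => hac h.symm), mul_zero]
  rw [Finset.sum_congr rfl fun a _ => hinner a]
  ring

end InpAdv


section Step

lemma trd_mono {S1 T1 S2 T2 : Type} [Fintype S1] [Fintype T1] [Fintype S2] [Fintype T2]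
    (Ai : pQTS S1 L T1) (As : pQTS S2 L T2)
    (hin : Ai.inputs = As.inputs) (hiS : inputEnabled As) (hp : pioco Ai As) :
    ∀ k : ℕ, trd Ai k ⊆ trd As k := by
  intro k
  induction k with
  | zero =>
    rintro f ⟨E, hE, hEh, hf⟩
    have hbase : IsAdversary As (fun _ o => if o = none then 1 else 0) :=
      ⟨fun π o => by dsimp only; split <;> norm_num,
        fun π t h => by dsimp only at h; simp at h, fun π => by simp⟩
    have hbaseh : haltsAfter
        (fun (_ : PPath S2 L T2) (o : Option T2) => if o = none then 1 else 0) 0 :=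
      fun π _ => if_pos rfl
    refine ⟨fun _ o => if o = none then 1 else 0, hbase, hbaseh, fun σ => ?_⟩
    rcases σ with _ | ⟨a, σ⟩
    · rw [hf, traceProb_nil, traceProb_nil]
    · rw [hf, traceProb_eq_zero_of_halts hE hEh (by simp),
        traceProb_eq_zero_of_halts hbase hbaseh (by simp)]
  | succ k ih =>
    rintro f ⟨E, hE, hEh, hf⟩
    have hfnn : ∀ σ, 0 ≤ f σ := fun σ => (hf σ) ▸ traceProb_nonneg hE.1 σ
    -- the length-k truncation of f
    have hfk_mem : traceProb Ai (truncAdv E k) ∈ trd Ai k :=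
      ⟨truncAdv E k, truncAdv_isAdversary hE k, truncAdv_halts E k, fun σ => rfl⟩
    have hfk : ∀ σ : List L, σ.length ≤ k → traceProb Ai (truncAdv E k) σ = f σ :=
      fun σ h => (traceProb_truncAdv E h).trans (hf σ).symm
    -- the output restriction g of f
    set g : List L → ℝ := traceProb Ai (outAdv Ai E k) with hg_def
    have hg_low : ∀ σ : List L, σ.length ≤ k → g σ = f σ :=
      fun σ h => (outAdv_traceProb_low E h).trans (hf σ).symm
    have hg_in : ∀ (σ : List L) (c : L), σ.length = k → c ∈ Ai.inputs →
        g (σ ++ [c]) = 0 := fun σ c hσ hc => outAdv_snoc_input hE hσ hc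
    have hg_out : ∀ (σ : List L) (c : L), σ.length = k → c ∉ Ai.inputs →
        g (σ ++ [c]) = f (σ ++ [c]) :=
      fun σ c hσ hc => (outAdv_snoc_output hE hσ hc).trans (hf _).symm
    have hg_oc : g ∈ outcont (traceProb Ai (truncAdv E k)) Ai k := by
      refine ⟨⟨outAdv Ai E k, outAdv_isAdversary hE k, outAdv_halts Ai E k,
        fun σ => rfl⟩, fun σ hσ => ?_, fun σ a hσ ha => hg_in σ a hσ ha⟩
      rw [hfk σ (le_of_eq hσ), hg_low σ (le_of_eq hσ)]
    have hg_As := hp k _ (ih hfk_mem) hg_oc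
    obtain ⟨⟨F, hFadv, hFh, hgF⟩, -, -⟩ := hg_As
    -- input transition selection in As
    have hsel : ∀ (s : S2) (a : {a : L // a ∈ As.inputs}),
        ∃ t : T2, As.src t = s ∧ emi As t a.1 = 1 ∧
          ∀ c, c ≠ a.1 → emi As t c = 0 := by
      intro s a
      obtain ⟨t, s', hsrc, hpos⟩ := hiS s a.1 a.2
      exact ⟨t, hsrc, em_input_eq_one a.2 hpos, fun c hc => em_input_ne a.2 hpos hc⟩
    choose tsel htsrc hemi1 hemi0 using hsel
    -- available halting mass and the input weights
    set Hval : List L → ℝ := fun σ => g σ - ∑ c, g (σ ++ [c]) with hHval_def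
    set q : List L → L → ℝ :=
      fun σ a => if 0 < Hval σ then f (σ ++ [a]) / Hval σ else 0 with hq_def
    have hkey : ∀ σ : List L, σ.length = k →
        (∑ a : {a : L // a ∈ As.inputs}, f (σ ++ [a.1])) ≤ Hval σ := by
      intro σ hσ
      have hsplitg : ∑ c, g (σ ++ [c]) =
          ∑ c ∈ Finset.univ.filter (fun c => c ∈ As.inputs), g (σ ++ [c]) +
          ∑ c ∈ Finset.univ.filter (fun c => ¬ c ∈ As.inputs), g (σ ++ [c]) :=
        (Finset.sum_filter_add_sum_filter_not _ _ _).symm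
      have h1 : ∑ c ∈ Finset.univ.filter (fun c => c ∈ As.inputs), g (σ ++ [c]) = 0 :=
        Finset.sum_eq_zero fun c hc =>
          hg_in σ c hσ (hin ▸ (Finset.mem_filter.1 hc).2)
      have h2 : ∑ c ∈ Finset.univ.filter (fun c => ¬ c ∈ As.inputs), g (σ ++ [c]) =
          ∑ c ∈ Finset.univ.filter (fun c => ¬ c ∈ As.inputs), f (σ ++ [c]) :=
        Finset.sum_congr rfl fun c hc =>
          hg_out σ c hσ (hin ▸ (Finset.mem_filter.1 hc).2)
      have hsplitf : ∑ c, f (σ ++ [c]) =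
          ∑ c ∈ Finset.univ.filter (fun c => c ∈ As.inputs), f (σ ++ [c]) +
          ∑ c ∈ Finset.univ.filter (fun c => ¬ c ∈ As.inputs), f (σ ++ [c]) :=
        (Finset.sum_filter_add_sum_filter_not _ _ _).symm
      have hle : ∑ c, f (σ ++ [c]) ≤ f σ := by
        have h := sum_snoc_le hE σ
        rw [← hf σ] at h
        calc ∑ c, f (σ ++ [c]) = ∑ c, traceProb Ai E (σ ++ [c]) :=
              Finset.sum_congr rfl fun c _ => hf _
          _ ≤ f σ := h
      have hsubty : ∑ a : {a : L // a ∈ As.inputs}, f (σ ++ [a.1]) =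
          ∑ c ∈ Finset.univ.filter (fun c => c ∈ As.inputs), f (σ ++ [c]) :=
        (Finset.sum_subtype (Finset.univ.filter (fun c => c ∈ As.inputs))
          (by simp) (fun c => f (σ ++ [c]))).symm
      have hgσ : g σ = f σ := hg_low σ (le_of_eq hσ)
      rw [hHval_def]
      simp only
      rw [hsplitg, h1, h2, hgσ, hsubty]
      linarith
    have hq0 : ∀ σ a, 0 ≤ q σ a := by
      intro σ a
      rw [hq_def]
      simp only
      split
      · exact div_nonneg (hfnn _) (le_of_lt (by assumption))
      · exact le_refl _
    have hq1 : ∀ σ : List L, σ.length = k →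
        ∑ a : {a : L // a ∈ As.inputs}, q σ a.1 ≤ 1 := by
      intro σ hσ
      by_cases hH : 0 < Hval σ
      · have : ∑ a : {a : L // a ∈ As.inputs}, q σ a.1 =
            (∑ a : {a : L // a ∈ As.inputs}, f (σ ++ [a.1])) / Hval σ := by
          rw [hq_def]
          simp only [if_pos hH]
          rw [Finset.sum_div]
        rw [this, div_le_one hH]
        exact hkey σ hσ
      · have : ∑ a : {a : L // a ∈ As.inputs}, q σ a.1 = 0 :=
          Finset.sum_eq_zero fun a _ => by rw [hq_def]; simp [hH]
        rw [this]; norm_num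
    -- the final adversary
    have hGadv := inpAdv_isAdversary hFadv hq0 hq1 htsrc
    have hGh := inpAdv_halts (tsel := tsel) (q := q) hFh
    refine ⟨inpAdv As F k q tsel, hGadv, hGh, fun σ => ?_⟩
    rcases lt_trichotomy σ.length (k + 1) with hlen | hlen | hlen
    · have hle : σ.length ≤ k := by omega
      rw [inpAdv_traceProb_low hle, ← hgF σ, hg_low σ hle]
    · rcases List.eq_nil_or_concat σ with rfl | ⟨σ₀, c, rfl⟩
      · simp at hlen
      · rw [List.concat_eq_append] at hlen ⊢
        have hσ₀ : σ₀.length = k := by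
          rw [List.length_append, List.length_singleton] at hlen; omega
        rw [inpAdv_snoc hFadv hq0 hq1 htsrc hemi1 hemi0 hσ₀ c, halt_mass hFadv σ₀]
        have hblob : traceProb As F σ₀ - ∑ c', traceProb As F (σ₀ ++ [c']) =
            Hval σ₀ := by
          rw [hHval_def]
          simp only [← hgF]
        rw [hblob]
        by_cases hc : c ∈ As.inputs
        · have hW : (∑ a : {a : L // a ∈ As.inputs},
              if a.1 = c then q σ₀ a.1 else 0) = q σ₀ c := by
            rw [← Finset.sum_subtype (Finset.univ.filter (fun a => a ∈ As.inputs))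
              (by simp) (fun a => if a = c then q σ₀ a else 0)]
            rw [Finset.sum_ite_eq' (Finset.univ.filter (fun a => a ∈ As.inputs)) c
              (fun a => q σ₀ a)]
            simp [hc]
          rw [hW, ← hgF, hg_in σ₀ c hσ₀ (hin ▸ hc), zero_add]
          by_cases hH : 0 < Hval σ₀
          · rw [hq_def]
            simp only [if_pos hH]
            rw [mul_div_cancel₀ _ (ne_of_gt hH)]
          · have hH0 : Hval σ₀ = 0 := by
              have h1 : 0 ≤ ∑ a : {a : L // a ∈ As.inputs}, f (σ₀ ++ [a.1]) :=
                Finset.sum_nonneg fun a _ => hfnn _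
              have h2 := hkey σ₀ hσ₀
              have := not_lt.1 hH
              linarith
            have hf0 : f (σ₀ ++ [c]) = 0 := by
              have h1 : f (σ₀ ++ [c]) ≤
                  ∑ a : {a : L // a ∈ As.inputs}, f (σ₀ ++ [a.1]) :=
                Finset.single_le_sum (f := fun a : {a : L // a ∈ As.inputs} =>
                  f (σ₀ ++ [a.1])) (fun a _ => hfnn _) (Finset.mem_univ ⟨c, hc⟩)
              have h2 := hkey σ₀ hσ₀
              have h3 := hfnn (σ₀ ++ [c])
              linarith
            rw [hf0, hq_def]
            simp [hH]
        · have hW : (∑ a : {a : L // a ∈ As.inputs},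
              if a.1 = c then q σ₀ a.1 else 0) = 0 :=
            Finset.sum_eq_zero fun a _ =>
              if_neg (fun (h : a.1 = c) => hc (h ▸ a.2))
          rw [hW, mul_zero, add_zero, ← hgF, hg_out σ₀ c hσ₀ (hin ▸ hc)]
    · rw [hf σ, traceProb_eq_zero_of_halts hE hEh hlen,
        traceProb_eq_zero_of_halts hGadv hGh hlen]

end Step


section Limit

lemma adv_le_one {A : pQTS S L T} {E : PPath S L T → Option T → ℝ}
    (hE : IsAdversary A E) (π : PPath S L T) (o : Option T) : E π o ≤ 1 := by
  cases o with
  | none => exact adv_none_le hE π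
  | some t => exact adv_some_le hE π t

lemma Qprob_tendsto {A : pQTS S L T} {ι : Type*} {l : Filter ι}
    {Es : ι → PPath S L T → Option T → ℝ} {Fl : PPath S L T → Option T → ℝ}
    (h : ∀ π o, Filter.Tendsto (fun i => Es i π o) l (nhds (Fl π o))) :
    ∀ π : PPath S L T,
      Filter.Tendsto (fun i => Qprob A (Es i) π) l (nhds (Qprob A Fl π))
  | [] => by simpa [Qprob] using tendsto_const_nhds
  | x :: π => by
    simpa [Qprob] using
      ((Qprob_tendsto h π).mul (h π (some x.1))).mul_const (A.dist x.1 (x.2.1, x.2.2))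

lemma traceProb_tendsto {A : pQTS S L T} {ι : Type*} {l : Filter ι}
    {Es : ι → PPath S L T → Option T → ℝ} {Fl : PPath S L T → Option T → ℝ}
    (h : ∀ π o, Filter.Tendsto (fun i => Es i π o) l (nhds (Fl π o))) (σ : List L) :
    Filter.Tendsto (fun i => traceProb A (Es i) σ) l (nhds (traceProb A Fl σ)) := by
  unfold traceProb
  exact tendsto_finset_sum _ fun π _ => Qprob_tendsto h π

lemma trdAll_of_approx {A : pQTS S L T} {f : List L → ℝ}
    (Fs : ℕ → PPath S L T → Option T → ℝ)
    (hadv : ∀ n, IsAdversary A (Fs n))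
    (hagree : ∀ n (σ : List L), σ.length ≤ n → traceProb A (Fs n) σ = f σ) :
    f ∈ trdAll A := by
  set U : Ultrafilter ℕ := Ultrafilter.of Filter.atTop with hU
  have hUatTop : (U : Filter ℕ) ≤ Filter.atTop := Ultrafilter.of_le _
  have hlim : ∀ (π : PPath S L T) (o : Option T), ∃ x,
      Filter.Tendsto (fun n => Fs n π o) (U : Filter ℕ) (nhds x) := by
    intro π o
    have hmem : ∀ n, Fs n π o ∈ Set.Icc (0:ℝ) 1 :=
      fun n => ⟨(hadv n).1 π o, adv_le_one (hadv n) π o⟩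
    have hle : (U.map (fun n => Fs n π o) : Filter ℝ) ≤ Filter.principal (Set.Icc 0 1) := by
      rw [Filter.le_principal_iff]
      exact Filter.mem_map.2 (Filter.univ_mem' hmem)
    obtain ⟨x, _, hx⟩ := (isCompact_Icc (a := (0:ℝ)) (b := 1)).ultrafilter_le_nhds
      (U.map (fun n => Fs n π o)) hle
    exact ⟨x, hx⟩
  choose Fl hFl using hlim
  have hFladv : IsAdversary A Fl := by
    refine ⟨fun π o => ?_, fun π t h => ?_, fun π => ?_⟩
    · exact ge_of_tendsto (hFl π o) (Filter.Eventually.of_forall fun n => (hadv n).1 π o)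
    · by_contra hsrc
      have h0 : Fl π (some t) = 0 :=
        tendsto_nhds_unique (hFl π (some t))
          (Filter.Tendsto.congr
            (fun n => (adv_some_eq_zero' (hadv n) hsrc).symm) tendsto_const_nhds)
      rw [h0] at h
      exact absurd h (lt_irrefl 0)
    · refine tendsto_nhds_unique
        ((hFl π none).add (tendsto_finset_sum _ fun t _ => hFl π (some t))) ?_
      exact Filter.Tendsto.congr (fun n => ((hadv n).2.2 π).symm) tendsto_const_nhds
  refine ⟨Fl, hFladv, fun σ => ?_⟩
  have hev : ∀ᶠ n in (U : Filter ℕ), traceProb A (Fs n) σ = f σ :=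
    Filter.Eventually.filter_mono hUatTop
      (Filter.eventually_atTop.2 ⟨σ.length, fun n hn => hagree n σ hn⟩)
  have h1 : Filter.Tendsto (fun n => traceProb A (Fs n) σ) (U : Filter ℕ)
      (nhds (f σ)) :=
    Filter.Tendsto.congr' (Filter.EventuallyEq.symm hev) tendsto_const_nhds
  exact tendsto_nhds_unique h1 (traceProb_tendsto hFl σ)

end Limit

theorem stmt10 {S1 T1 S2 T2 : Type} [Fintype S1] [Fintype T1] [Fintype S2] [Fintype T2]
    (Ai : pQTS S1 L T1) (As : pQTS S2 L T2)
    (hin : Ai.inputs = As.inputs) (hdel : Ai.delta = As.delta)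
    (hiI : inputEnabled Ai) (hiS : inputEnabled As) :
    pioco Ai As ↔ trdAll Ai ⊆ trdAll As := by
  constructor
  · intro hp f hf
    obtain ⟨E, hE, hfE⟩ := hf
    have h : ∀ n : ℕ, ∃ F, IsAdversary As F ∧ haltsAfter F n ∧
        ∀ σ, traceProb Ai (truncAdv E n) σ = traceProb As F σ := by
      intro n
      exact trd_mono Ai As hin hiS hp n
        ⟨truncAdv E n, truncAdv_isAdversary hE n, truncAdv_halts E n, fun σ => rfl⟩
    choose Fs hFadv hFh hFtr using h
    refine trdAll_of_approx Fs hFadv fun n σ hσ => ?_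
    rw [← hFtr n σ, traceProb_truncAdv E hσ, ← hfE σ]
  · intro h k H hH H' hH'
    obtain ⟨hH'trd, hpre, hzero⟩ := hH'
    refine ⟨?_, hpre, fun σ a hσ ha => hzero σ a hσ (by rw [hin]; exact ha)⟩
    obtain ⟨E, hE, hEh, hH'E⟩ := hH'trd
    have hH'0 : ∀ σ : List L, k + 1 < σ.length → H' σ = 0 := by
      intro σ hσ
      rw [hH'E σ, traceProb_eq_zero_of_halts hE hEh hσ]
    obtain ⟨F, hF, hH'F⟩ := h ⟨E, hE, hH'E⟩
    refine ⟨truncAdv F (k + 1), truncAdv_isAdversary hF (k + 1),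
      truncAdv_halts F (k + 1), fun σ => ?_⟩
    rcases le_or_gt σ.length (k + 1) with hσ | hσ
    · rw [traceProb_truncAdv F hσ, ← hH'F σ]
    · rw [hH'0 σ hσ, traceProb_eq_zero_of_halts (truncAdv_isAdversary hF (k + 1))
        (truncAdv_halts F (k + 1)) hσ]
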